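/- Let m, n₁, n₂ be positive integers, f_1,…,f_m : ℝ^{n₁} × ℝ^{n₂} → ℝ, h : ℝ^{n₂} → ℝ, L > 0, and W = (w_{ij}) ∈ ℝ^{m×m} with W𝟏 = 𝟏 and Null(W − I) = Span{𝟏} (i.e., Σ_j w_{ij} = 1 for each i, and (W−I)v = 0 iff v is a multiple of 𝟏). Fix x̄ ∈ ℝ^{n₁} and a multiplier tuple Λ̄ = (λ̄_1,…,λ̄_m) ∈ (ℝ^{n₂})^m. Suppose Ȳ = (ȳ_1,…,ȳ_m) ∈ (ℝ^{n₂})^m satisfies: (a) Φ((x̄,…,x̄), Λ̄, Ȳ) ≥ Φ((x̄,…,x̄), Λ̄, Y) for every Y ∈ (ℝ^{n₂})^m (Ȳ maximizes Φ((x̄,…,x̄), Λ̄, ·)); and (b) Σ_{j=1}^m (w_{ij} − δ_{ij}) ȳ_j = 0 for every i (i.e., (W−I)Ȳ = 0, equivalently the Λ-gradient of P(x̄, ·) vanishes at Λ̄). Then all the blocks of Ȳ coincide, ȳ_1 = ⋯ = ȳ_m =: ȳ, and ȳ maximizes the function y ↦ (1/m) Σ_{i=1}^m f_i(x̄, y)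 − h(y) over ℝ^{n₂}. -/

import Mathlib

open scoped BigOperators RealInnerProductSpace

/-- The function `Φ(X, Λ, Y)` of the reformulated decentralized minimax problem. -/
noncomputable def Phi {m n₁ n₂ : ℕ} (L : ℝ)
    (f : Fin m → EuclideanSpace ℝ (Fin n₁) → EuclideanSpace ℝ (Fin n₂) → ℝ)
    (h : EuclideanSpace ℝ (Fin n₂) → ℝ) (w : Fin m → Fin m → ℝ)
    (X : Fin m → EuclideanSpace ℝ (Fin n₁))
    (Λ Y : Fin m → EuclideanSpace ℝ (Fin n₂)) : ℝ :=
  (1 / (m : ℝ)) * ∑ i, (f i (X i) (Y i) - h (Y i))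
    - (L / (2 * Real.sqrt (m : ℝ))) *
        ∑ i, ⟪Λ i, ∑ j, (w i j - if i = j then 1 else 0) • Y j⟫

/-- If `Yb` maximizes `Φ((xb,…,xb), Lamb, ·)` and `(W − I)Yb = 0`
(the `Λ`-gradient of `P(xb, ·)` vanishes at `Lamb`), then all blocks of `Yb` coincide with
some `yb`, and `yb` maximizes `y ↦ (1/m) Σ_i f_i(xb, y) − h(y)`. -/
theorem dgdmax_stationary_reformulation_implies_original
    {m n₁ n₂ : ℕ} (hm : 0 < m) (hn₁ : 0 < n₁) (hn₂ : 0 < n₂)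
    (f : Fin m → EuclideanSpace ℝ (Fin n₁) → EuclideanSpace ℝ (Fin n₂) → ℝ)
    (h : EuclideanSpace ℝ (Fin n₂) → ℝ) (L : ℝ) (hL : 0 < L)
    (w : Fin m → Fin m → ℝ)
    (hrow : ∀ i, ∑ j, w i j = 1)
    (hnull : ∀ v : Fin m → ℝ,
      (∀ i, ∑ j, (w i j - if i = j then 1 else 0) * v j = 0) ↔ ∃ c : ℝ, ∀ i, v i = c)
    (xb : EuclideanSpace ℝ (Fin n₁))
    (Lamb Yb : Fin m → EuclideanSpace ℝ (Fin n₂))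
    (hmax : ∀ Y : Fin m → EuclideanSpace ℝ (Fin n₂),
      Phi L f h w (fun _ => xb) Lamb Y ≤ Phi L f h w (fun _ => xb) Lamb Yb)
    (hstat : ∀ i, ∑ j, (w i j - if i = j then 1 else 0) • Yb j = 0) :
    ∃ yb : EuclideanSpace ℝ (Fin n₂), (∀ i, Yb i = yb) ∧
      ∀ y : EuclideanSpace ℝ (Fin n₂),
        (1 / (m : ℝ)) * ∑ i, f i xb y - h y ≤ (1 / (m : ℝ)) * ∑ i, f i xb yb - h yb := by

  -- all blocks coincide
  have i0 : Fin m := ⟨0, hm⟩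
  set yb := Yb i0 with hyb
  have hconst : ∀ i, Yb i = yb := by
    intro i
    ext k
    have hk : ∀ i', ∑ j, (w i' j - if i' = j then 1 else 0) * (Yb j k) = 0 := by
      intro i'
      have h0 := congrArg (fun v => v k) (hstat i')
      have h1 : (∑ j, (w i' j - if i' = j then 1 else 0) • Yb j) k
          = ∑ j, (w i' j - if i' = j then 1 else 0) * Yb j k := by
        induction (Finset.univ : Finset (Fin m)) using Finset.induction with
        | empty => simp
        | insert _ _ hx ih =>
          rw [Finset.sum_insert hx, Finset.sum_insert hx, ← ih]
          rfl
      rw [h1] at h0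
      exact h0
    obtain ⟨c, hc⟩ := (hnull fun j => Yb j k).mp hk
    rw [hyb, hc i, hc i0]
  refine ⟨yb, hconst, fun y => ?_⟩
  -- penalty vanishes at constant tuples
  have hpen : ∀ z : EuclideanSpace ℝ (Fin n₂), ∀ i,
      ∑ j, (w i j - if i = j then 1 else 0) • z = (0 : EuclideanSpace ℝ (Fin n₂)) := by
    intro z i
    rw [← Finset.sum_smul]
    have : ∑ j, (w i j - if i = j then 1 else 0) = 0 := by
      rw [Finset.sum_sub_distrib, hrow]
      simp
    rw [this, zero_smul]
  have hval : ∀ z : EuclideanSpace ℝ (Fin n₂),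
      Phi L f h w (fun _ => xb) Lamb (fun _ => z)
        = (1 / (m : ℝ)) * ∑ i, f i xb z - h z := by
    intro z
    have hm' : (m : ℝ) ≠ 0 := Nat.cast_ne_zero.mpr hm.ne'
    simp only [Phi, hpen z, inner_zero_right, Finset.sum_const_zero, mul_zero, sub_zero,
      Finset.sum_sub_distrib, Finset.sum_const, Finset.card_univ, Fintype.card_fin,
      nsmul_eq_mul, mul_sub]
    field_simp
  have hYb : Phi L f h w (fun _ => xb) Lamb Yb
      = (1 / (m : ℝ)) * ∑ i, f i xb yb - h yb := by
    have : Yb = fun _ => yb := funext hconst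
    rw [this, hval]
  have := hmax (fun _ => y)
  rwa [hval y, hYb] at this
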